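/- For tensors X ∈ ℂ^{n1×n2×n3} and Y ∈ ℂ^{n2×n4×n3}, the t-product Z = X * Y satisfies that, for each k ∈ {1,…,n3}, the k-th frontal slice of the Fourier transform of Z along mode 3 equals the matrix product of the k-th frontal slices of the Fourier transforms of X and Y: Ẑ^{(k)} = X̂^{(k)} · Ŷ^{(k)}. -/

import Mathlib

open Complex Matrix BigOperators Kronecker

noncomputable section

/-- DFT along the third mode, applied slice-wise. -/
def dft {n1 n2 n3 : ℕ} (X : Fin n3 → Matrix (Fin n1) (Fin n2) ℂ) :
    Fin n3 → Matrix (Fin n1) (Fin n2) ℂ :=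
  fun k => ∑ j : Fin n3,
    Complex.exp (-2 * (Real.pi : ℂ) * Complex.I * ((k : ℕ) : ℂ) * ((j : ℕ) : ℂ) / (n3 : ℂ)) • X j

/-- Block circulant matrix of a third-order tensor. -/
def bcirc {n1 n2 n3 : ℕ} (X : Fin n3 → Matrix (Fin n1) (Fin n2) ℂ) :
    Matrix (Fin n3 × Fin n1) (Fin n3 × Fin n2) ℂ :=
  Matrix.of fun p q => X (p.1 - q.1) p.2 q.2

/-- Vertical stacking of the frontal slices. -/
def bvec {n2 n4 n3 : ℕ} (Y : Fin n3 → Matrix (Fin n2) (Fin n4) ℂ) :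
    Matrix (Fin n3 × Fin n2) (Fin n4) ℂ :=
  Matrix.of fun p c => Y p.1 p.2 c

/-- t-product of third-order tensors, defined via bvfold(bcirc(X)·bvec(Y)). -/
def tMul {n1 n2 n4 n3 : ℕ} (X : Fin n3 → Matrix (Fin n1) (Fin n2) ℂ)
    (Y : Fin n3 → Matrix (Fin n2) (Fin n4) ℂ) :
    Fin n3 → Matrix (Fin n1) (Fin n4) ℂ :=
  fun k => Matrix.of fun a c => (bcirc X * bvec Y) (k, a) c

/-- Tensor conjugate transpose: conjugate-transpose each frontal slice and
reverse the order of slices 2 through n3. -/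
def tH {n1 n2 n3 : ℕ} (X : Fin n3 → Matrix (Fin n1) (Fin n2) ℂ) :
    Fin n3 → Matrix (Fin n2) (Fin n1) ℂ :=
  fun k => (X (-k))ᴴ

/-- Identity tensor: first frontal slice the identity matrix, others zero. -/
def tId (n1 n3 : ℕ) : Fin n3 → Matrix (Fin n1) (Fin n1) ℂ :=
  fun k => if (k : ℕ) = 0 then 1 else 0

/-- Frobenius norm of a third-order tensor. -/
def fro {n1 n2 n3 : ℕ} (X : Fin n3 → Matrix (Fin n1) (Fin n2) ℂ) : ℝ :=
  Real.sqrt (∑ k, ∑ i, ∑ j, ‖X k i j‖ ^ 2)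

/-- Squared Frobenius norm of a matrix. -/
def mFrobSq {m n : ℕ} (A : Matrix (Fin m) (Fin n) ℂ) : ℝ :=
  ∑ i, ∑ j, ‖A i j‖ ^ 2

/-- Tubal rank: maximal rank of the Fourier-domain frontal slices. -/
def tubalRank {n1 n2 n3 : ℕ} (X : Fin n3 → Matrix (Fin n1) (Fin n2) ℂ) : ℕ :=
  Finset.univ.sup fun k => (dft X k).rank

/-- Mode-1 matricization. -/
def mode1 {n1 n2 n3 : ℕ} (X : Fin n3 → Matrix (Fin n1) (Fin n2) ℂ) :
    Matrix (Fin n1) (Fin n2 × Fin n3) ℂ :=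
  Matrix.of fun i p => X p.2 i p.1

/-- Mode-2 matricization. -/
def mode2 {n1 n2 n3 : ℕ} (X : Fin n3 → Matrix (Fin n1) (Fin n2) ℂ) :
    Matrix (Fin n2) (Fin n1 × Fin n3) ℂ :=
  Matrix.of fun j p => X p.2 p.1 j

/-- The n×n discrete Fourier matrix. -/
def dftMatrix (n : ℕ) : Matrix (Fin n) (Fin n) ℂ :=
  Matrix.of fun j k =>
    Complex.exp (-2 * (Real.pi : ℂ) * Complex.I * ((j : ℕ) : ℂ) * ((k : ℕ) : ℂ) / (n : ℂ))

theorem dft_tprod {n1 n2 n4 n3 : ℕ} (X : Fin n3 → Matrix (Fin n1) (Fin n2) ℂ)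
    (Y : Fin n3 → Matrix (Fin n2) (Fin n4) ℂ) (k : Fin n3) :
    dft (tMul X Y) k = dft X k * dft Y k := by
  have hn3 : 0 < n3 := k.pos
  haveI : NeZero n3 := ⟨hn3.ne'⟩
  have hcn3 : (n3 : ℂ) ≠ 0 := Nat.cast_ne_zero.mpr hn3.ne'
  set E : ℕ → ℂ := fun j =>
    Complex.exp (-2 * (Real.pi : ℂ) * Complex.I * ((k : ℕ) : ℂ) * (j : ℂ) / (n3 : ℂ)) with hE
  have hEadd : ∀ a b : ℕ, E (a + b) = E a * E b := by
    intro a b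
    simp only [hE, Nat.cast_add]
    rw [← Complex.exp_add]
    congr 1
    field_simp
    ring
  have hEper : ∀ m : ℕ, E (m % n3) = E m := by
    intro m
    conv_rhs => rw [← Nat.mod_add_div m n3, hEadd]
    have h1 : E (n3 * (m / n3)) = 1 := by
      set q := m / n3 with hq
      simp only [hE]
      have heq : -2 * (Real.pi : ℂ) * Complex.I * ((k : ℕ) : ℂ) * (((n3 * q : ℕ)) : ℂ) / (n3 : ℂ)
          = ((-((k : ℕ) * q : ℕ) : ℤ) : ℂ) * (2 * (Real.pi : ℂ) * Complex.I) := by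
        push_cast
        field_simp
      rw [heq, Complex.exp_int_mul_two_pi_mul_I]
    rw [h1, mul_one]
  have hEfin : ∀ a b : Fin n3, E ((a + b : Fin n3) : ℕ) = E a * E b := by
    intro a b
    rw [Fin.val_add, hEper, hEadd]
  have htmul : ∀ j : Fin n3, tMul X Y j = ∑ p : Fin n3, X (j - p) * Y p := by
    intro j
    ext a c
    simp only [tMul, bcirc, bvec, Matrix.of_apply, Matrix.mul_apply, Matrix.sum_apply]
    rw [Fintype.sum_prod_type]
  calc dft (tMul X Y) k
      = ∑ j : Fin n3, E j • ∑ p : Fin n3, X (j - p) * Y p := by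
        simp only [dft, htmul]
        rfl
    _ = ∑ p : Fin n3, ∑ j : Fin n3, E j • (X (j - p) * Y p) := by
        rw [Finset.sum_comm]
        simp [Finset.smul_sum]
    _ = ∑ p : Fin n3, ∑ l : Fin n3, (E l * E p) • (X l * Y p) := by
        refine Finset.sum_congr rfl fun p _ => ?_
        refine (Fintype.sum_equiv (Equiv.addRight p)
          (fun l => (E l * E p) • (X l * Y p))
          (fun j => E (j : ℕ) • (X (j - p) * Y p)) (fun l => ?_)).symm
        simp only [Equiv.coe_addRight]
        rw [hEfin, add_sub_cancel_right]
    _ = dft X k * dft Y k := by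
        rw [Finset.sum_comm]
        simp only [dft]
        rw [Matrix.sum_mul]
        refine Finset.sum_congr rfl fun l _ => ?_
        rw [Matrix.mul_sum]
        refine Finset.sum_congr rfl fun p _ => ?_
        rw [Matrix.smul_mul, Matrix.mul_smul, smul_smul, mul_comm]
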